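/- arXiv:1810.08805 — 2 statements merged into one kernel-verified Lean document; each statement's English description precedes it below -/
import Mathlib

section
/- Let $A_0$ be a real $p \times p$ matrix with spectral radius $\rho(A_0) < 1$, and let $(\beta_n)_{n \ge 0}$ be a real sequence with $\sum_{n \ge 1} \beta_n^2 < \infty$ and $\beta_n \to 0$. Define the $2p \times 2p$ matrices $\widetilde{A}_n = \begin{pmatrix} A_0 & \beta_n A_0 \\ \beta_n Id_p & Id_p \end{pmatrix}$ for $n \ge 1$ and $\widetilde{A}_0 = \begin{pmatrix} A_0 & A_0 \\ Id_p & Id_p \end{pmatrix}$. Then $\sup_{n \in \mathbb{N}} \big\| \widetilde{A}_{n-1}\widetilde{A}_{n-2}\cdots\widetilde{A}_0 \big\| < \infty$. -/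
open Filter Topology

attribute [local instance] Matrix.linftyOpNormedRing
attribute [local instance] Matrix.linftyOpNormedAlgebra

open scoped NNReal ENNReal

lemma gron_aux_geo {r : ℝ} (hr0 : 0 < r) (hr1 : r < 1) (n : ℕ) :
    ∑ k ∈ Finset.range n, r ^ k ≤ 1 / (1 - r) := by
  have h1r : (0:ℝ) < 1 - r := by linarith
  have h1 : ∑ k ∈ Finset.range n, r ^ k = (r ^ n - 1) / (r - 1) := geom_sum_eq hr1.ne n
  have h2 : (r ^ n - 1) / (r - 1) = (1 - r ^ n) / (1 - r) := by
    rw [div_eq_div_iff (by linarith) (by linarith)]; ring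
  rw [h1, h2, div_le_div_iff₀ h1r h1r]
  nlinarith [pow_nonneg hr0.le n]

lemma gron_aux_geoShift {r : ℝ} (hr0 : 0 < r) (hr1 : r < 1) (k : ℕ) :
    ∑ j ∈ Finset.range k, r ^ (k - j) ≤ 1 / (1 - r) := by
  have h1 : ∑ j ∈ Finset.range k, r ^ (k - j) = ∑ j ∈ Finset.range k, r ^ (j + 1) := by
    rw [← Finset.sum_range_reflect]
    refine Finset.sum_congr rfl fun j hj => ?_
    rw [Finset.mem_range] at hj
    have : k - (k - 1 - j) = j + 1 := by omega
    rw [this]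
  rw [h1]
  calc ∑ j ∈ Finset.range k, r ^ (j + 1)
      ≤ ∑ j ∈ Finset.range k, r ^ j :=
        Finset.sum_le_sum fun j _ => pow_le_pow_of_le_one hr0.le hr1.le (by omega)
    _ ≤ 1 / (1 - r) := gron_aux_geo hr0 hr1 k

lemma gron_aux_geoIco {r : ℝ} (hr0 : 0 < r) (hr1 : r < 1) (j n : ℕ) :
    ∑ k ∈ Finset.Ico (j + 1) n, r ^ (k - j) ≤ 1 / (1 - r) := by
  rw [Finset.sum_Ico_eq_sum_range]
  have h1 : ∀ i, r ^ (j + 1 + i - j) = r ^ (i + 1) := fun i => by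
    have : j + 1 + i - j = i + 1 := by omega
    rw [this]
  calc ∑ i ∈ Finset.range (n - (j + 1)), r ^ (j + 1 + i - j)
      = ∑ i ∈ Finset.range (n - (j + 1)), r ^ (i + 1) := Finset.sum_congr rfl fun i _ => h1 i
    _ ≤ ∑ i ∈ Finset.range (n - (j + 1)), r ^ i :=
        Finset.sum_le_sum fun i _ => pow_le_pow_of_le_one hr0.le hr1.le (by omega)
    _ ≤ 1 / (1 - r) := gron_aux_geo hr0 hr1 _

lemma gronwall (c : ℕ → ℝ) (hc : ∀ k, 0 ≤ c k) (B : ℝ) (hB : ∀ k, c k ≤ B)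
    (C r u0 v0 : ℝ) (hC : 0 < C) (hr0 : 0 < r) (hr1 : r < 1) (hu0 : 0 ≤ u0) (hv0 : 0 ≤ v0)
    (u v : ℕ → ℝ) (hvnn : ∀ n, 0 ≤ v n)
    (N : ℕ) (hN : ∀ n, (∑ k ∈ Finset.Ico N n, c k ^ 2) ≤ (1 - r) / (2 * C))
    (hu : ∀ n, u n ≤ C * r ^ n * u0 + C * ∑ j ∈ Finset.range n, r ^ (n - j) * (c j * v j))
    (hv : ∀ n, v n ≤ v0 + ∑ k ∈ Finset.range n, c k * u k) :
    ∃ D : ℝ, ∀ n, u n ≤ D ∧ v n ≤ D := by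
  have h1r : (0:ℝ) < 1 - r := by linarith
  have hB0 : 0 ≤ B := (hc 0).trans (hB 0)
  have hrN : (0:ℝ) < r ^ N := pow_pos hr0 N
  -- ∑ c k r^k ≤ B/(1-r)
  have sum_cr : ∀ n, ∑ k ∈ Finset.range n, c k * r ^ k ≤ B / (1 - r) := by
    intro n
    calc ∑ k ∈ Finset.range n, c k * r ^ k
        ≤ ∑ k ∈ Finset.range n, B * r ^ k :=
          Finset.sum_le_sum fun k _ => mul_le_mul_of_nonneg_right (hB k) (pow_nonneg hr0.le k)
      _ = B * ∑ k ∈ Finset.range n, r ^ k := by rw [Finset.mul_sum]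
      _ ≤ B * (1 / (1 - r)) := mul_le_mul_of_nonneg_left (gron_aux_geo hr0 hr1 n) hB0
      _ = B / (1 - r) := by ring
  obtain ⟨T, hTdef⟩ : ∃ T : ℝ, T = ∑ j ∈ Finset.range N, c j * v j := ⟨_, rfl⟩
  have hT0 : 0 ≤ T := hTdef ▸ Finset.sum_nonneg fun j _ => mul_nonneg (hc j) (hvnn j)
  obtain ⟨K, hKdef⟩ : ∃ K : ℝ, K = v0 + C * u0 * (B / (1 - r)) + C * (B / (1 - r) / r ^ N * T) :=
    ⟨_, rfl⟩
  have hK0 : 0 ≤ K := by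
    have h1 : (0:ℝ) ≤ B / (1 - r) := div_nonneg hB0 h1r.le
    have h2 : (0:ℝ) ≤ B / (1 - r) / r ^ N * T := mul_nonneg (div_nonneg h1 hrN.le) hT0
    have h3 : (0:ℝ) ≤ C * u0 * (B / (1 - r)) := mul_nonneg (mul_nonneg hC.le hu0) h1
    have h4 : (0:ℝ) ≤ C * (B / (1 - r) / r ^ N * T) := mul_nonneg hC.le h2
    rw [hKdef]
    linarith
  obtain ⟨D, hDdef⟩ : ∃ D : ℝ, D = 2 * K + 1 := ⟨_, rfl⟩
  have hD0 : 0 ≤ D := by linarith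
  -- r^(k-j) ≤ r^k / r^N for j < N
  have hrkj : ∀ k j : ℕ, j < N → r ^ (k - j) ≤ r ^ k / r ^ N := by
    intro k j hj
    rcases le_or_gt j k with h | h
    · rw [pow_sub₀ r hr0.ne' h]
      exact div_le_div_of_nonneg_left (pow_nonneg hr0.le k) hrN
        (pow_le_pow_of_le_one hr0.le hr1.le hj.le)
    · have hkj : k - j = 0 := by omega
      rw [hkj, pow_zero, le_div_iff₀ hrN, one_mul]
      exact pow_le_pow_of_le_one hr0.le hr1.le (by omega)
  -- main claim: v n ≤ D by strong induction
  have hvD : ∀ n, v n ≤ D := by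
    intro n
    induction n using Nat.strong_induction_on with
    | _ n IH =>
    have step1 : v n ≤ v0 + ∑ k ∈ Finset.range n,
        c k * (C * r ^ k * u0 + C * ∑ j ∈ Finset.range k, r ^ (k - j) * (c j * v j)) := by
      refine (hv n).trans (add_le_add_right (Finset.sum_le_sum fun k _ => ?_) v0)
      exact mul_le_mul_of_nonneg_left (hu k) (hc k)
    have step2 : ∑ k ∈ Finset.range n,
        c k * (C * r ^ k * u0 + C * ∑ j ∈ Finset.range k, r ^ (k - j) * (c j * v j))
        = C * u0 * (∑ k ∈ Finset.range n, c k * r ^ k)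
          + C * ∑ k ∈ Finset.range n, c k * ∑ j ∈ Finset.range k, r ^ (k - j) * (c j * v j) := by
      rw [Finset.mul_sum, Finset.mul_sum, ← Finset.sum_add_distrib]
      exact Finset.sum_congr rfl fun k _ => by ring
    -- inner split
    have split : ∀ k ∈ Finset.range n,
        c k * (∑ j ∈ Finset.range k, r ^ (k - j) * (c j * v j)) ≤
        c k * (∑ j ∈ Finset.range N, r ^ (k - j) * (c j * v j))
        + c k * ∑ j ∈ Finset.Ico N k, r ^ (k - j) * (c j * v j) := by
      intro k _
      rw [← mul_add]
      refine mul_le_mul_of_nonneg_left ?_ (hc k)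
      rcases le_total k N with h | h
      · have he : Finset.Ico N k = ∅ := Finset.Ico_eq_empty (by omega)
        rw [he, Finset.sum_empty, add_zero]
        refine Finset.sum_le_sum_of_subset_of_nonneg (Finset.range_subset_range.mpr h)
          fun j _ _ => mul_nonneg (pow_nonneg hr0.le _) (mul_nonneg (hc j) (hvnn j))
      · rw [Finset.sum_range_add_sum_Ico _ h]
    -- part A
    have partA : ∑ k ∈ Finset.range n, c k * (∑ j ∈ Finset.range N, r ^ (k - j) * (c j * v j))
        ≤ B / (1 - r) / r ^ N * T := by
      have pA : ∀ k ∈ Finset.range n,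
          c k * (∑ j ∈ Finset.range N, r ^ (k - j) * (c j * v j))
          ≤ c k * r ^ k * (T / r ^ N) := by
        intro k _
        have inner : ∑ j ∈ Finset.range N, r ^ (k - j) * (c j * v j)
            ≤ ∑ j ∈ Finset.range N, r ^ k / r ^ N * (c j * v j) := by
          refine Finset.sum_le_sum fun j hj => ?_
          rw [Finset.mem_range] at hj
          exact mul_le_mul_of_nonneg_right (hrkj k j hj) (mul_nonneg (hc j) (hvnn j))
        have : ∑ j ∈ Finset.range N, r ^ k / r ^ N * (c j * v j) = r ^ k / r ^ N * T := by
          rw [hTdef, Finset.mul_sum]  -- T unfold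
        calc c k * (∑ j ∈ Finset.range N, r ^ (k - j) * (c j * v j))
            ≤ c k * (r ^ k / r ^ N * T) := by
              refine mul_le_mul_of_nonneg_left ?_ (hc k)
              rw [← this]; exact inner
          _ = c k * r ^ k * (T / r ^ N) := by ring
      calc ∑ k ∈ Finset.range n, c k * (∑ j ∈ Finset.range N, r ^ (k - j) * (c j * v j))
          ≤ ∑ k ∈ Finset.range n, c k * r ^ k * (T / r ^ N) := Finset.sum_le_sum pA
        _ = (∑ k ∈ Finset.range n, c k * r ^ k) * (T / r ^ N) := by rw [Finset.sum_mul]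
        _ ≤ B / (1 - r) * (T / r ^ N) :=
            mul_le_mul_of_nonneg_right (sum_cr n) (div_nonneg hT0 hrN.le)
        _ = B / (1 - r) / r ^ N * T := by ring
    -- part B
    have partB : ∑ k ∈ Finset.range n, c k * ∑ j ∈ Finset.Ico N k, r ^ (k - j) * (c j * v j)
        ≤ D * (1 / (2 * C)) := by
      -- bound v j ≤ D via IH and c k * c j ≤ (c k ^2 + c j^2)/2
      have stepB1 : ∑ k ∈ Finset.range n, c k * ∑ j ∈ Finset.Ico N k, r ^ (k - j) * (c j * v j)
          ≤ ∑ k ∈ Finset.range n, ∑ j ∈ Finset.Ico N k,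
              (r ^ (k - j) * (c k ^ 2 / 2) * D + r ^ (k - j) * (c j ^ 2 / 2) * D) := by
        refine Finset.sum_le_sum fun k hk => ?_
        rw [Finset.mul_sum]
        refine Finset.sum_le_sum fun j hj => ?_
        rw [Finset.mem_range] at hk
        rw [Finset.mem_Ico] at hj
        have hvj : v j ≤ D := IH j (by omega)
        have hcc : c k * c j ≤ c k ^ 2 / 2 + c j ^ 2 / 2 := by nlinarith [sq_nonneg (c k - c j)]
        have hrp : (0:ℝ) ≤ r ^ (k - j) := pow_nonneg hr0.le _
        calc c k * (r ^ (k - j) * (c j * v j)) ≤ c k * (r ^ (k - j) * (c j * D)) := by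
              refine mul_le_mul_of_nonneg_left (mul_le_mul_of_nonneg_left ?_ hrp) (hc k)
              exact mul_le_mul_of_nonneg_left hvj (hc j)
          _ = r ^ (k - j) * (c k * c j) * D := by ring
          _ ≤ r ^ (k - j) * (c k ^ 2 / 2 + c j ^ 2 / 2) * D := by
              refine mul_le_mul_of_nonneg_right (mul_le_mul_of_nonneg_left hcc hrp) hD0
          _ = r ^ (k - j) * (c k ^ 2 / 2) * D + r ^ (k - j) * (c j ^ 2 / 2) * D := by ring
      have hsplitB : ∑ k ∈ Finset.range n, ∑ j ∈ Finset.Ico N k,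
            (r ^ (k - j) * (c k ^ 2 / 2) * D + r ^ (k - j) * (c j ^ 2 / 2) * D)
          = (∑ k ∈ Finset.range n, ∑ j ∈ Finset.Ico N k, r ^ (k - j) * (c k ^ 2 / 2) * D)
            + ∑ k ∈ Finset.range n, ∑ j ∈ Finset.Ico N k, r ^ (k - j) * (c j ^ 2 / 2) * D := by
        rw [← Finset.sum_add_distrib]
        exact Finset.sum_congr rfl fun k _ => by rw [← Finset.sum_add_distrib]
      -- T1
      have hT1 : ∑ k ∈ Finset.range n, ∑ j ∈ Finset.Ico N k, r ^ (k - j) * (c k ^ 2 / 2) * D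
          ≤ 1 / (1 - r) * (1 / 2) * ((1 - r) / (2 * C)) * D := by
        have hsub : Finset.Ico N n ⊆ Finset.range n := fun x hx => by
          rw [Finset.mem_Ico] at hx; rw [Finset.mem_range]; omega
        have hzero : ∀ x ∈ Finset.range n, x ∉ Finset.Ico N n →
            (∑ j ∈ Finset.Ico N x, r ^ (x - j) * (c x ^ 2 / 2) * D) = 0 := by
          intro x hx hnx
          rw [Finset.mem_range] at hx
          have : Finset.Ico N x = ∅ := Finset.Ico_eq_empty (by
            intro h; exact hnx (Finset.mem_Ico.mpr ⟨by omega, hx⟩))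
          rw [this, Finset.sum_empty]
        rw [← Finset.sum_subset hsub hzero]
        have hterm : ∀ k ∈ Finset.Ico N n,
            (∑ j ∈ Finset.Ico N k, r ^ (k - j) * (c k ^ 2 / 2) * D)
            ≤ 1 / (1 - r) * (c k ^ 2 / 2) * D := by
          intro k _
          have : ∑ j ∈ Finset.Ico N k, r ^ (k - j) * (c k ^ 2 / 2) * D
              = (∑ j ∈ Finset.Ico N k, r ^ (k - j)) * (c k ^ 2 / 2) * D := by
            rw [Finset.sum_mul, Finset.sum_mul]
          rw [this]
          have hgeo : (∑ j ∈ Finset.Ico N k, r ^ (k - j)) ≤ 1 / (1 - r) := by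
            refine le_trans (Finset.sum_le_sum_of_subset_of_nonneg
              (fun x hx => by rw [Finset.mem_Ico] at hx; rw [Finset.mem_range]; omega)
              fun j _ _ => pow_nonneg hr0.le _) (gron_aux_geoShift hr0 hr1 k)
          refine mul_le_mul_of_nonneg_right (mul_le_mul_of_nonneg_right hgeo ?_) hD0
          positivity
        calc ∑ k ∈ Finset.Ico N n, ∑ j ∈ Finset.Ico N k, r ^ (k - j) * (c k ^ 2 / 2) * D
            ≤ ∑ k ∈ Finset.Ico N n, 1 / (1 - r) * (c k ^ 2 / 2) * D := Finset.sum_le_sum hterm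
          _ = 1 / (1 - r) * (1 / 2) * (∑ k ∈ Finset.Ico N n, c k ^ 2) * D := by
              simp only [Finset.sum_mul, Finset.mul_sum]
              exact Finset.sum_congr rfl fun k _ => by ring
          _ ≤ 1 / (1 - r) * (1 / 2) * ((1 - r) / (2 * C)) * D := by
              refine mul_le_mul_of_nonneg_right (mul_le_mul_of_nonneg_left (hN n) ?_) hD0
              positivity
      -- T2 : swap the order of summation
      have hT2 : ∑ k ∈ Finset.range n, ∑ j ∈ Finset.Ico N k, r ^ (k - j) * (c j ^ 2 / 2) * D
          ≤ 1 / (1 - r) * (1 / 2) * ((1 - r) / (2 * C)) * D := by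
        have hrect : ∀ k ∈ Finset.range n,
            (∑ j ∈ Finset.Ico N k, r ^ (k - j) * (c j ^ 2 / 2) * D)
            = ∑ j ∈ Finset.Ico N n, (if j < k then r ^ (k - j) * (c j ^ 2 / 2) * D else 0) := by
          intro k hk
          rw [Finset.mem_range] at hk
          rw [Finset.sum_ite, Finset.sum_const_zero, add_zero]
          refine (Finset.sum_congr ?_ fun _ _ => rfl)
          ext x
          simp only [Finset.mem_filter, Finset.mem_Ico]
          omega
        rw [Finset.sum_congr rfl hrect, Finset.sum_comm]
        have hinner : ∀ j ∈ Finset.Ico N n,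
            (∑ k ∈ Finset.range n, (if j < k then r ^ (k - j) * (c j ^ 2 / 2) * D else 0))
            ≤ 1 / (1 - r) * (c j ^ 2 / 2) * D := by
          intro j _
          have : ∑ k ∈ Finset.range n, (if j < k then r ^ (k - j) * (c j ^ 2 / 2) * D else 0)
              = ∑ k ∈ Finset.Ico (j + 1) n, r ^ (k - j) * (c j ^ 2 / 2) * D := by
            rw [Finset.sum_ite, Finset.sum_const_zero, add_zero]
            refine Finset.sum_congr ?_ fun _ _ => rfl
            ext x
            simp only [Finset.mem_filter, Finset.mem_range, Finset.mem_Ico]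
            omega
          rw [this]
          have heq : ∑ k ∈ Finset.Ico (j + 1) n, r ^ (k - j) * (c j ^ 2 / 2) * D
              = (∑ k ∈ Finset.Ico (j + 1) n, r ^ (k - j)) * (c j ^ 2 / 2) * D := by
            rw [Finset.sum_mul, Finset.sum_mul]
          rw [heq]
          refine mul_le_mul_of_nonneg_right (mul_le_mul_of_nonneg_right
            (gron_aux_geoIco hr0 hr1 j n) (by positivity)) hD0
        calc ∑ j ∈ Finset.Ico N n, ∑ k ∈ Finset.range n,
              (if j < k then r ^ (k - j) * (c j ^ 2 / 2) * D else 0)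
            ≤ ∑ j ∈ Finset.Ico N n, 1 / (1 - r) * (c j ^ 2 / 2) * D :=
              Finset.sum_le_sum hinner
          _ = 1 / (1 - r) * (1 / 2) * (∑ j ∈ Finset.Ico N n, c j ^ 2) * D := by
              simp only [Finset.sum_mul, Finset.mul_sum]
              exact Finset.sum_congr rfl fun k _ => by ring
          _ ≤ 1 / (1 - r) * (1 / 2) * ((1 - r) / (2 * C)) * D := by
              refine mul_le_mul_of_nonneg_right (mul_le_mul_of_nonneg_left (hN n) ?_) hD0
              positivity
      have hfin : 1 / (1 - r) * (1 / 2) * ((1 - r) / (2 * C)) * D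
            + 1 / (1 - r) * (1 / 2) * ((1 - r) / (2 * C)) * D = D * (1 / (2 * C)) := by
        field_simp
        ring
      calc ∑ k ∈ Finset.range n, c k * ∑ j ∈ Finset.Ico N k, r ^ (k - j) * (c j * v j)
          ≤ _ := stepB1
        _ = _ := hsplitB
        _ ≤ 1 / (1 - r) * (1 / 2) * ((1 - r) / (2 * C)) * D
            + 1 / (1 - r) * (1 / 2) * ((1 - r) / (2 * C)) * D := add_le_add hT1 hT2
        _ = D * (1 / (2 * C)) := hfin
    -- combine
    have hCS : C * (D * (1 / (2 * C))) = D / 2 := by field_simp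
    have final : v n ≤ K + D / 2 := by
      have h1 : ∑ k ∈ Finset.range n, c k * ∑ j ∈ Finset.range k, r ^ (k - j) * (c j * v j)
          ≤ B / (1 - r) / r ^ N * T + D * (1 / (2 * C)) := by
        calc ∑ k ∈ Finset.range n, c k * ∑ j ∈ Finset.range k, r ^ (k - j) * (c j * v j)
            ≤ ∑ k ∈ Finset.range n,
              (c k * (∑ j ∈ Finset.range N, r ^ (k - j) * (c j * v j))
                + c k * ∑ j ∈ Finset.Ico N k, r ^ (k - j) * (c j * v j)) :=
              Finset.sum_le_sum split
          _ = (∑ k ∈ Finset.range n, c k * (∑ j ∈ Finset.range N, r ^ (k - j) * (c j * v j)))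
              + ∑ k ∈ Finset.range n, c k * ∑ j ∈ Finset.Ico N k, r ^ (k - j) * (c j * v j) :=
              Finset.sum_add_distrib
          _ ≤ _ := add_le_add partA partB
      have h2 : v n ≤ v0 + (C * u0 * (∑ k ∈ Finset.range n, c k * r ^ k)
          + C * ∑ k ∈ Finset.range n, c k * ∑ j ∈ Finset.range k, r ^ (k - j) * (c j * v j)) := by
        rw [← step2]; exact step1
      have h3 : C * u0 * (∑ k ∈ Finset.range n, c k * r ^ k) ≤ C * u0 * (B / (1 - r)) :=
        mul_le_mul_of_nonneg_left (sum_cr n) (by positivity)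
      have h4 : C * ∑ k ∈ Finset.range n, c k * ∑ j ∈ Finset.range k, r ^ (k - j) * (c j * v j)
          ≤ C * (B / (1 - r) / r ^ N * T) + D / 2 := by
        calc C * ∑ k ∈ Finset.range n, c k * ∑ j ∈ Finset.range k, r ^ (k - j) * (c j * v j)
            ≤ C * (B / (1 - r) / r ^ N * T + D * (1 / (2 * C))) :=
              mul_le_mul_of_nonneg_left h1 hC.le
          _ = C * (B / (1 - r) / r ^ N * T) + C * (D * (1 / (2 * C))) := by ring
          _ = C * (B / (1 - r) / r ^ N * T) + D / 2 := by rw [hCS]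
      rw [hKdef]; linarith
    rw [hDdef] at final ⊢
    linarith
  -- bound u
  have huD : ∀ n, u n ≤ C * u0 + C * (B * D * (1 / (1 - r))) := by
    intro n
    refine (hu n).trans ?_
    have h1 : C * r ^ n * u0 ≤ C * u0 := by
      have h := mul_le_mul_of_nonneg_left (pow_le_one₀ hr0.le hr1.le (n := n))
        (mul_nonneg hC.le hu0)
      calc C * r ^ n * u0 = C * u0 * r ^ n := by ring
        _ ≤ C * u0 * 1 := h
        _ = C * u0 := mul_one _
    have h2 : ∑ j ∈ Finset.range n, r ^ (n - j) * (c j * v j)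
        ≤ B * D * (1 / (1 - r)) := by
      calc ∑ j ∈ Finset.range n, r ^ (n - j) * (c j * v j)
          ≤ ∑ j ∈ Finset.range n, r ^ (n - j) * (B * D) := by
            refine Finset.sum_le_sum fun j _ => ?_
            refine mul_le_mul_of_nonneg_left ?_ (pow_nonneg hr0.le _)
            exact mul_le_mul (hB j) (hvD j) (hvnn j) hB0
        _ = (∑ j ∈ Finset.range n, r ^ (n - j)) * (B * D) := by rw [Finset.sum_mul]
        _ ≤ 1 / (1 - r) * (B * D) := by
            refine mul_le_mul_of_nonneg_right (gron_aux_geoShift hr0 hr1 n) ?_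
            exact mul_nonneg hB0 hD0
        _ = B * D * (1 / (1 - r)) := by ring
    have := mul_le_mul_of_nonneg_left h2 hC.le
    linarith
  refine ⟨max D (C * u0 + C * (B * D * (1 / (1 - r)))), fun n => ⟨?_, ?_⟩⟩
  · exact (huD n).trans (le_max_right _ _)
  · exact (hvD n).trans (le_max_left _ _)

lemma norm_map_ofReal {p : ℕ} (M : Matrix (Fin p) (Fin p) ℝ) :
    ‖M.map (Complex.ofReal)‖ = ‖M‖ := by
  rw [Matrix.linfty_opNorm_def, Matrix.linfty_opNorm_def]
  congr 1
  refine Finset.sup_congr rfl fun i _ => ?_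
  refine Finset.sum_congr rfl fun j _ => ?_
  simp [Matrix.map_apply]

lemma pow_bound {p : ℕ} (hp : 0 < p) (A0 : Matrix (Fin p) (Fin p) ℝ)
    (hρ : ∀ μ ∈ spectrum ℂ (A0.map (Complex.ofReal)), ‖μ‖ < 1) :
    ∃ C r : ℝ, 0 < C ∧ 0 < r ∧ r < 1 ∧ ∀ m : ℕ, ‖A0 ^ m‖ ≤ C * r ^ m := by
  haveI : NeZero p := ⟨hp.ne'⟩
  haveI : CompleteSpace (Matrix (Fin p) (Fin p) ℂ) := FiniteDimensional.complete ℂ _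
  set Ac := A0.map (Complex.ofReal) with hAc
  have hsr : spectralRadius ℂ Ac < (1 : ℝ≥0) := by
    refine spectrum.spectralRadius_lt_of_forall_lt Ac fun z hz => ?_
    have := hρ z hz
    exact_mod_cast this
  obtain ⟨r₀, hr₀1, hr₀2⟩ := ENNReal.lt_iff_exists_nnreal_btwn.mp hsr
  set r : ℝ≥0 := max r₀ (1/2) with hrdef
  have hrlt1 : r < 1 := by
    rw [hrdef]
    refine max_lt ?_ one_half_lt_one
    exact_mod_cast hr₀2
  have hrpos : 0 < r := lt_of_lt_of_le (by norm_num) (le_max_right r₀ (1/2))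
  have hsrr : spectralRadius ℂ Ac < (r : ℝ≥0∞) := by
    refine lt_of_lt_of_le hr₀1 ?_
    exact_mod_cast le_max_left r₀ (1/2)
  have hgel := spectrum.pow_nnnorm_pow_one_div_tendsto_nhds_spectralRadius Ac
  have hev : ∀ᶠ n : ℕ in atTop, (‖Ac ^ n‖₊ : ℝ≥0∞) ^ (1 / (n:ℝ)) < (r : ℝ≥0∞) :=
    hgel.eventually_lt_const hsrr
  obtain ⟨N, hN⟩ := (hev.and (eventually_ge_atTop 1)).exists_forall_of_atTop
  -- for n ≥ N (with N ≥ ...) we get ‖Ac ^ n‖₊ ≤ r ^ n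
  have key : ∀ n : ℕ, N ≤ n → 1 ≤ n → ‖A0 ^ n‖ ≤ (r : ℝ) ^ n := by
    intro n hn h1
    have h := (hN n hn).1
    have hne : (1 / (n:ℝ)) ≠ 0 := by positivity
    have h2 : (‖Ac ^ n‖₊ : ℝ≥0∞) ≤ (r : ℝ≥0∞) ^ (n : ℝ) := by
      have h3 := ENNReal.rpow_le_rpow h.le (by positivity : (0:ℝ) ≤ (n:ℝ))
      rwa [← ENNReal.rpow_mul, one_div,
        inv_mul_cancel₀ (by positivity : (n:ℝ) ≠ 0), ENNReal.rpow_one] at h3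
    rw [ENNReal.rpow_natCast, ← ENNReal.coe_pow, ENNReal.coe_le_coe] at h2
    have h4 : ‖Ac ^ n‖ ≤ (r:ℝ) ^ n := by exact_mod_cast h2
    have h5 : Ac ^ n = (A0 ^ n).map (Complex.ofReal) := by
      rw [hAc]
      exact (map_pow (Complex.ofRealHom.mapMatrix (m := Fin p)) A0 n).symm
    rwa [h5, norm_map_ofReal] at h4
  refine ⟨1 + ∑ k ∈ Finset.range (N + 1), ‖A0 ^ k‖ / (r:ℝ) ^ k, r, ?_, hrpos, ?_, ?_⟩
  · have : (0:ℝ) ≤ ∑ k ∈ Finset.range (N + 1), ‖A0 ^ k‖ / (r:ℝ) ^ k :=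
      Finset.sum_nonneg fun k _ => div_nonneg (norm_nonneg _) (by positivity)
    linarith
  · exact_mod_cast hrlt1
  · intro m
    have hrm : (0:ℝ) < (r:ℝ) ^ m := by positivity
    rcases le_or_gt (N + 1) m with h | h
    · calc ‖A0 ^ m‖ ≤ (r:ℝ) ^ m := key m (by omega) (by omega)
        _ = 1 * (r:ℝ) ^ m := (one_mul _).symm
        _ ≤ _ := by
          refine mul_le_mul_of_nonneg_right ?_ hrm.le
          have : (0:ℝ) ≤ ∑ k ∈ Finset.range (N + 1), ‖A0 ^ k‖ / (r:ℝ) ^ k :=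
            Finset.sum_nonneg fun k _ => div_nonneg (norm_nonneg _) (by positivity)
          linarith
    · have hmem : m ∈ Finset.range (N + 1) := Finset.mem_range.mpr h
      have h1 : ‖A0 ^ m‖ / (r:ℝ) ^ m ≤ ∑ k ∈ Finset.range (N + 1), ‖A0 ^ k‖ / (r:ℝ) ^ k :=
        Finset.single_le_sum (f := fun k => ‖A0 ^ k‖ / (r:ℝ) ^ k)
          (fun k _ => div_nonneg (norm_nonneg _) (by positivity)) hmem
      have h2 : ‖A0 ^ m‖ = ‖A0 ^ m‖ / (r:ℝ) ^ m * (r:ℝ) ^ m := by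
        field_simp
      rw [h2]
      refine mul_le_mul_of_nonneg_right ?_ hrm.le
      linarith
lemma norm_fromBlocks_le {p : ℕ} (A B C D : Matrix (Fin p) (Fin p) ℝ) :
    ‖Matrix.fromBlocks A B C D‖ ≤ ‖A‖ + ‖B‖ + (‖C‖ + ‖D‖) := by
  have h : ‖Matrix.fromBlocks A B C D‖₊ ≤ ‖A‖₊ + ‖B‖₊ + (‖C‖₊ + ‖D‖₊) := by
    rw [Matrix.linfty_opNNNorm_def]
    refine Finset.sup_le fun i _ => ?_
    have hA : ∀ a : Fin p, ∑ j, ‖A a j‖₊ ≤ ‖A‖₊ := fun a => by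
      rw [Matrix.linfty_opNNNorm_def]
      exact Finset.le_sup (f := fun i => ∑ j, ‖A i j‖₊) (Finset.mem_univ a)
    have hB : ∀ a : Fin p, ∑ j, ‖B a j‖₊ ≤ ‖B‖₊ := fun a => by
      rw [Matrix.linfty_opNNNorm_def]
      exact Finset.le_sup (f := fun i => ∑ j, ‖B i j‖₊) (Finset.mem_univ a)
    have hC : ∀ a : Fin p, ∑ j, ‖C a j‖₊ ≤ ‖C‖₊ := fun a => by
      rw [Matrix.linfty_opNNNorm_def]
      exact Finset.le_sup (f := fun i => ∑ j, ‖C i j‖₊) (Finset.mem_univ a)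
    have hD : ∀ a : Fin p, ∑ j, ‖D a j‖₊ ≤ ‖D‖₊ := fun a => by
      rw [Matrix.linfty_opNNNorm_def]
      exact Finset.le_sup (f := fun i => ∑ j, ‖D i j‖₊) (Finset.mem_univ a)
    cases i with
    | inl a =>
      calc ∑ j : Fin p ⊕ Fin p, ‖Matrix.fromBlocks A B C D (Sum.inl a) j‖₊
          = (∑ j : Fin p, ‖A a j‖₊) + ∑ j : Fin p, ‖B a j‖₊ := by
            rw [Fintype.sum_sum_type]; rfl
        _ ≤ ‖A‖₊ + ‖B‖₊ := add_le_add (hA a) (hB a)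
        _ ≤ ‖A‖₊ + ‖B‖₊ + (‖C‖₊ + ‖D‖₊) := le_self_add
    | inr a =>
      calc ∑ j : Fin p ⊕ Fin p, ‖Matrix.fromBlocks A B C D (Sum.inr a) j‖₊
          = (∑ j : Fin p, ‖C a j‖₊) + ∑ j : Fin p, ‖D a j‖₊ := by
            rw [Fintype.sum_sum_type]; rfl
        _ ≤ ‖C‖₊ + ‖D‖₊ := add_le_add (hC a) (hD a)
        _ ≤ _ := le_add_self
  exact_mod_cast h

/-- Boundedness of the products `Ã_{n-1} ⋯ Ã_0` where
`Ã_n = [[A₀, βₙ A₀], [βₙ I, I]]` (for `n ≥ 1`), `Ã_0 = [[A₀, A₀], [I, I]]`,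
`ρ(A₀) < 1`, `∑ βₙ² < ∞` and `βₙ → 0`. -/
theorem stmt3 {p : ℕ} (A0 : Matrix (Fin p) (Fin p) ℝ)
    (hρ : ∀ μ ∈ spectrum ℂ (A0.map (Complex.ofReal)), ‖μ‖ < 1)
    (β : ℕ → ℝ) (hβsum : Summable fun n => β n ^ 2) (hβ0 : Tendsto β atTop (𝓝 0))
    (Atil : ℕ → Matrix (Fin p ⊕ Fin p) (Fin p ⊕ Fin p) ℝ)
    (hAtil0 : Atil 0 = Matrix.fromBlocks A0 A0 1 1)
    (hAtil : ∀ n : ℕ, 1 ≤ n → Atil n = Matrix.fromBlocks A0 (β n • A0) (β n • (1 : Matrix (Fin p) (Fin p) ℝ)) 1)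
    (P : ℕ → Matrix (Fin p ⊕ Fin p) (Fin p ⊕ Fin p) ℝ)
    (hP0 : P 0 = 1) (hPsucc : ∀ n, P (n + 1) = Atil n * P n) :
    ∃ C : ℝ, ∀ n, ‖P n‖ ≤ C := by
  rcases Nat.eq_zero_or_pos p with hp0 | hp
  · subst hp0
    refine ⟨0, fun n => ?_⟩
    rw [Subsingleton.elim (P n) 0, norm_zero]
  obtain ⟨C0, r, hC0, hr0, hr1, hpow⟩ := pow_bound hp A0 hρ
  -- modified coefficient sequence
  set b : ℕ → ℝ := fun n => if n = 0 then 1 else β n with hbdef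
  set c : ℕ → ℝ := fun n => |b n| with hcdef
  have hAtil' : ∀ n, Atil n =
      Matrix.fromBlocks A0 (b n • A0) (b n • (1 : Matrix (Fin p) (Fin p) ℝ)) 1 := by
    intro n
    rcases Nat.eq_zero_or_pos n with h | h
    · subst h; rw [hAtil0]; simp [hbdef]
    · rw [hAtil n h]; simp [hbdef, h.ne']
  -- block recursion
  have hrec : ∀ n, P (n + 1) = Matrix.fromBlocks
      (A0 * (P n).toBlocks₁₁ + b n • (A0 * (P n).toBlocks₂₁))
      (A0 * (P n).toBlocks₁₂ + b n • (A0 * (P n).toBlocks₂₂))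
      (b n • (P n).toBlocks₁₁ + (P n).toBlocks₂₁)
      (b n • (P n).toBlocks₁₂ + (P n).toBlocks₂₂) := by
    intro n
    rw [hPsucc n, hAtil' n]
    conv_lhs => rw [← Matrix.fromBlocks_toBlocks (P n)]
    rw [Matrix.fromBlocks_multiply]
    simp [smul_mul_assoc, Matrix.one_mul]
  have hX1 : ∀ n, (P (n + 1)).toBlocks₁₁
      = A0 * (P n).toBlocks₁₁ + b n • (A0 * (P n).toBlocks₂₁) := by
    intro n
    have h := congrArg Matrix.toBlocks₁₁ (hrec n)
    rwa [Matrix.toBlocks_fromBlocks₁₁] at h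
  have hY1 : ∀ n, (P (n + 1)).toBlocks₁₂
      = A0 * (P n).toBlocks₁₂ + b n • (A0 * (P n).toBlocks₂₂) := by
    intro n
    have h := congrArg Matrix.toBlocks₁₂ (hrec n)
    rwa [Matrix.toBlocks_fromBlocks₁₂] at h
  have hZ1 : ∀ n, (P (n + 1)).toBlocks₂₁
      = b n • (P n).toBlocks₁₁ + (P n).toBlocks₂₁ := by
    intro n
    have h := congrArg Matrix.toBlocks₂₁ (hrec n)
    rwa [Matrix.toBlocks_fromBlocks₂₁] at h
  have hW1 : ∀ n, (P (n + 1)).toBlocks₂₂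
      = b n • (P n).toBlocks₁₂ + (P n).toBlocks₂₂ := by
    intro n
    have h := congrArg Matrix.toBlocks₂₂ (hrec n)
    rwa [Matrix.toBlocks_fromBlocks₂₂] at h
  -- unrolled recursions (generic)
  have hXn : ∀ (Xs Zs : ℕ → Matrix (Fin p) (Fin p) ℝ),
      (∀ n, Xs (n + 1) = A0 * Xs n + b n • (A0 * Zs n)) →
      ∀ n, Xs n = A0 ^ n * Xs 0 + ∑ j ∈ Finset.range n, b j • (A0 ^ (n - j) * Zs j) := by
    intro Xs Zs h n
    induction n with
    | zero => simp
    | succ n ih =>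
      rw [h n, ih, mul_add, ← mul_assoc, ← pow_succ']
      have h1 : A0 * ∑ j ∈ Finset.range n, b j • (A0 ^ (n - j) * Zs j)
          = ∑ j ∈ Finset.range n, b j • (A0 ^ (n + 1 - j) * Zs j) := by
        rw [Finset.mul_sum]
        refine Finset.sum_congr rfl fun j hj => ?_
        rw [Finset.mem_range] at hj
        rw [mul_smul_comm, ← mul_assoc, ← pow_succ']
        have : n - j + 1 = n + 1 - j := by omega
        rw [this]
      rw [h1, Finset.sum_range_succ]
      have h2 : n + 1 - n = 1 := by omega
      rw [h2, pow_one]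
      abel
  have hZn : ∀ (Xs Zs : ℕ → Matrix (Fin p) (Fin p) ℝ),
      (∀ n, Zs (n + 1) = b n • Xs n + Zs n) →
      ∀ n, Zs n = Zs 0 + ∑ j ∈ Finset.range n, b j • Xs j := by
    intro Xs Zs h n
    induction n with
    | zero => simp
    | succ n ih =>
      rw [h n, ih, Finset.sum_range_succ]
      abel
  -- norm bounds (generic)
  have hKey : ∀ (Xs Zs : ℕ → Matrix (Fin p) (Fin p) ℝ),
      (∀ n, Xs n = A0 ^ n * Xs 0 + ∑ j ∈ Finset.range n, b j • (A0 ^ (n - j) * Zs j)) →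
      ∀ n, ‖Xs n‖ ≤ C0 * r ^ n * ‖Xs 0‖
        + ∑ j ∈ Finset.range n, C0 * r ^ (n - j) * (c j * ‖Zs j‖) := by
    intro Xs Zs h n
    rw [h n]
    refine (norm_add_le _ _).trans (add_le_add ?_ ?_)
    · calc ‖A0 ^ n * Xs 0‖ ≤ ‖A0 ^ n‖ * ‖Xs 0‖ := Matrix.linfty_opNorm_mul _ _
        _ ≤ C0 * r ^ n * ‖Xs 0‖ := mul_le_mul_of_nonneg_right (hpow n) (norm_nonneg _)
    · refine (norm_sum_le _ _).trans (Finset.sum_le_sum fun j hj => ?_)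
      rw [norm_smul, Real.norm_eq_abs]
      calc |b j| * ‖A0 ^ (n - j) * Zs j‖
          ≤ |b j| * (‖A0 ^ (n - j)‖ * ‖Zs j‖) :=
            mul_le_mul_of_nonneg_left (Matrix.linfty_opNorm_mul _ _) (abs_nonneg _)
        _ ≤ |b j| * (C0 * r ^ (n - j) * ‖Zs j‖) :=
            mul_le_mul_of_nonneg_left
              (mul_le_mul_of_nonneg_right (hpow _) (norm_nonneg _)) (abs_nonneg _)
        _ = C0 * r ^ (n - j) * (c j * ‖Zs j‖) := by simp only [hcdef]; ring
  have hZkey : ∀ (Xs Zs : ℕ → Matrix (Fin p) (Fin p) ℝ),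
      (∀ n, Zs n = Zs 0 + ∑ j ∈ Finset.range n, b j • Xs j) →
      ∀ n, ‖Zs n‖ ≤ ‖Zs 0‖ + ∑ j ∈ Finset.range n, c j * ‖Xs j‖ := by
    intro Xs Zs h n
    rw [h n]
    refine (norm_add_le _ _).trans (add_le_add le_rfl
      ((norm_sum_le _ _).trans (Finset.sum_le_sum fun j _ => ?_)))
    rw [norm_smul, Real.norm_eq_abs]
  -- the scalar sequences
  set u : ℕ → ℝ := fun n => ‖(P n).toBlocks₁₁‖ + ‖(P n).toBlocks₁₂‖ with hudef
  set v : ℕ → ℝ := fun n => ‖(P n).toBlocks₂₁‖ + ‖(P n).toBlocks₂₂‖ with hvdef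
  have hu : ∀ n, u n ≤ C0 * r ^ n * u 0
      + C0 * ∑ j ∈ Finset.range n, r ^ (n - j) * (c j * v j) := by
    intro n
    have hx := hKey (fun n => (P n).toBlocks₁₁) (fun n => (P n).toBlocks₂₁) (hXn _ _ hX1) n
    have hy := hKey (fun n => (P n).toBlocks₁₂) (fun n => (P n).toBlocks₂₂) (hXn _ _ hY1) n
    have hsum : (∑ j ∈ Finset.range n, C0 * r ^ (n - j) * (c j * ‖(P j).toBlocks₂₁‖))
        + ∑ j ∈ Finset.range n, C0 * r ^ (n - j) * (c j * ‖(P j).toBlocks₂₂‖)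
        = C0 * ∑ j ∈ Finset.range n, r ^ (n - j) * (c j * v j) := by
      rw [← Finset.sum_add_distrib, Finset.mul_sum]
      refine Finset.sum_congr rfl fun j _ => ?_
      simp only [hvdef]
      ring
    simp only [hudef]
    linarith [hx, hy, hsum]
  have hv : ∀ n, v n ≤ v 0 + ∑ k ∈ Finset.range n, c k * u k := by
    intro n
    have hz := hZkey (fun n => (P n).toBlocks₁₁) (fun n => (P n).toBlocks₂₁) (hZn _ _ hZ1) n
    have hw := hZkey (fun n => (P n).toBlocks₁₂) (fun n => (P n).toBlocks₂₂) (hZn _ _ hW1) n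
    have hsum : (∑ j ∈ Finset.range n, c j * ‖(P j).toBlocks₁₁‖)
        + ∑ j ∈ Finset.range n, c j * ‖(P j).toBlocks₁₂‖
        = ∑ k ∈ Finset.range n, c k * u k := by
      rw [← Finset.sum_add_distrib]
      refine Finset.sum_congr rfl fun j _ => ?_
      simp only [hudef]
      ring
    simp only [hvdef]
    linarith [hz, hw, hsum]
  -- positivity
  have hc : ∀ k, 0 ≤ c k := fun k => abs_nonneg _
  have hvnn : ∀ n, 0 ≤ v n := fun n => by
    simp only [hvdef]; positivity
  have hu0nn : 0 ≤ u 0 := by simp only [hudef]; positivity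
  have hv0nn : 0 ≤ v 0 := hvnn 0
  -- bound on c
  obtain ⟨M, hM⟩ : ∃ M : ℝ, ∀ k, |β k| ≤ M := by
    have habs : Tendsto (fun n => |β n|) atTop (𝓝 0) := by
      have := hβ0.abs
      simpa using this
    obtain ⟨M, hM⟩ := habs.bddAbove_range
    exact ⟨M, fun k => hM (Set.mem_range_self k)⟩
  have hcB : ∀ k, c k ≤ max M 1 := by
    intro k
    simp only [hcdef, hbdef]
    rcases Nat.eq_zero_or_pos k with h | h
    · subst h; simp
    · rw [if_neg h.ne']
      exact (hM k).trans (le_max_left _ _)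
  -- tail condition
  have hε : 0 < (1 - r) / (2 * C0) := div_pos (by linarith) (by linarith)
  obtain ⟨N, hN1, hN2⟩ : ∃ N : ℕ, 1 ≤ N ∧
      (∑' k, β k ^ 2) - (1 - r) / (2 * C0) < ∑ k ∈ Finset.range N, β k ^ 2 := by
    have hS := hβsum.hasSum.tendsto_sum_nat
    have hev : ∀ᶠ N in atTop, (∑' k, β k ^ 2) - (1 - r) / (2 * C0)
        < ∑ k ∈ Finset.range N, β k ^ 2 :=
      hS.eventually_const_lt (by linarith)
    obtain ⟨N, h1, h2⟩ := ((eventually_ge_atTop 1).and hev).exists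
    exact ⟨N, h1, h2⟩
  have htail : ∀ n, ∑ k ∈ Finset.Ico N n, c k ^ 2 ≤ (1 - r) / (2 * C0) := by
    intro n
    rcases le_total n N with h | h
    · rw [Finset.Ico_eq_empty (by omega), Finset.sum_empty]
      exact hε.le
    · have hequiv : ∑ k ∈ Finset.Ico N n, c k ^ 2 = ∑ k ∈ Finset.Ico N n, β k ^ 2 := by
        refine Finset.sum_congr rfl fun k hk => ?_
        rw [Finset.mem_Ico] at hk
        simp only [hcdef, hbdef]
        rw [if_neg (by omega : ¬ k = 0)]
        exact sq_abs (β k)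
      rw [hequiv, Finset.sum_Ico_eq_sub _ h]
      have h1 : ∑ k ∈ Finset.range n, β k ^ 2 ≤ ∑' k, β k ^ 2 :=
        Summable.sum_le_tsum _ (fun k _ => sq_nonneg _) hβsum
      linarith
  -- apply the Gronwall lemma
  obtain ⟨D, hD⟩ := gronwall c hc (max M 1) hcB C0 r (u 0) (v 0) hC0 hr0 hr1 hu0nn hv0nn
    u v hvnn N htail hu hv
  refine ⟨2 * D, fun n => ?_⟩
  have h1 := (hD n).1
  have h2 := (hD n).2
  simp only [hudef, hvdef] at h1 h2
  calc ‖P n‖ = ‖Matrix.fromBlocks (P n).toBlocks₁₁ (P n).toBlocks₁₂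
        (P n).toBlocks₂₁ (P n).toBlocks₂₂‖ := by rw [Matrix.fromBlocks_toBlocks]
    _ ≤ ‖(P n).toBlocks₁₁‖ + ‖(P n).toBlocks₁₂‖
        + (‖(P n).toBlocks₂₁‖ + ‖(P n).toBlocks₂₂‖) := norm_fromBlocks_le _ _ _ _
    _ ≤ D + D := add_le_add h1 h2
    _ = 2 * D := by ring
end

section
/- Suppose $\frac{1}{p \log n}\sum_{k=1}^n \big(1 - \frac{k^p}{(k+1)^p}\big)\frac{M_k M_k^*}{k} \to I(\theta)$ a.s. for a sequence of random vectors $M_k \in \mathbb{R}^p$, and $\frac{\langle M\rangle_k}{k} \to I(\theta)$ a.s. with $I(\theta)$ invertible. Then $\frac{1}{\log n}\sum_{k=1}^n \langle M\rangle_k^{-1} M_k M_k^* \langle M\rangle_k^{-1} \to I(\theta)^{-1}$ a.s. -/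
open MeasureTheory ProbabilityTheory Filter Topology Matrix


lemma aux_limit {p : ℕ} (hp : 1 ≤ p) :
    Tendsto (fun k : ℕ => (k : ℝ) * (1 - (k : ℝ) ^ p / ((k : ℝ) + 1) ^ p)) atTop (𝓝 p) := by
  have hg : HasDerivAt (fun x : ℝ => -(1 - x) ^ p) (p : ℝ) 0 := by
    have h1 : HasDerivAt (fun x : ℝ => 1 - x) (-1) 0 := by
      simpa using (hasDerivAt_id (0:ℝ)).const_sub (1:ℝ)
    have h2 := (h1.fun_pow p)
    have h3 := h2.fun_neg
    rw [show (p : ℝ) = -(↑p * (1 - 0) ^ (p - 1) * -1) by simp]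
    exact h3
  have hslope := hg.tendsto_slope_zero
  -- compose with (k+1)⁻¹
  have h0 : Tendsto (fun k : ℕ => ((k : ℝ) + 1)⁻¹) atTop (𝓝[≠] 0) := by
    apply tendsto_nhdsWithin_of_tendsto_nhds_of_eventually_within
    · simpa only [one_div] using tendsto_one_div_add_atTop_nhds_zero_nat (𝕜 := ℝ)
    · filter_upwards [] with k
      simp only [Set.mem_compl_iff, Set.mem_singleton_iff]
      positivity
  have hcomp := hslope.comp h0
  have hs : Tendsto (fun k : ℕ => ((k : ℝ) + 1) * (1 - (k : ℝ) ^ p / ((k : ℝ) + 1) ^ p))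
      atTop (𝓝 p) := by
    apply hcomp.congr
    intro k
    have hk1 : ((k : ℝ) + 1) ≠ 0 := by positivity
    have h4 : (1 : ℝ) - ((k : ℝ) + 1)⁻¹ = (k : ℝ) / ((k : ℝ) + 1) := by field_simp; ring
    simp only [Function.comp_apply, zero_add, smul_eq_mul, inv_inv, h4, div_pow]
    ring
  have hq : Tendsto (fun k : ℕ => (k : ℝ) / ((k : ℝ) + 1)) atTop (𝓝 1) := by
    have := tendsto_one_div_add_atTop_nhds_zero_nat (𝕜 := ℝ)
    have h5 : Tendsto (fun k : ℕ => 1 - 1 / ((k : ℝ) + 1)) atTop (𝓝 (1 - 0)) :=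
      tendsto_const_nhds.sub this
    simp only [sub_zero] at h5
    apply h5.congr
    intro k
    have hk1 : ((k : ℝ) + 1) ≠ 0 := by positivity
    field_simp
    ring
  have := hs.mul hq
  rw [mul_one] at this
  apply this.congr
  intro k
  have hk1 : ((k : ℝ) + 1) ≠ 0 := by positivity
  field_simp

lemma aux_smul_inv {p : ℕ} (hp : 1 ≤ p) {c : ℝ} (hc : c ≠ 0)
    (A : Matrix (Fin p) (Fin p) ℝ) : (c • A)⁻¹ = c⁻¹ • A⁻¹ := by
  rw [Matrix.inv_def, Matrix.inv_def, Matrix.det_smul, Matrix.adjugate_smul,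
    Ring.inverse_eq_inv, Ring.inverse_eq_inv, smul_smul, smul_smul]
  congr 1
  rw [Fintype.card_fin]
  have hcp : c ^ (p - 1) ≠ 0 := pow_ne_zero _ hc
  have hpp : c ^ p = c ^ (p - 1) * c := by
    rw [← pow_succ, Nat.sub_add_cancel hp]
  rw [hpp, mul_inv, mul_inv]
  have h2 : (c ^ (p-1))⁻¹ * c⁻¹ * A.det⁻¹ * c ^ (p-1)
      = (c ^ (p-1) * (c ^ (p-1))⁻¹) * (c⁻¹ * A.det⁻¹) := by ring
  rw [h2, mul_inv_cancel₀ hcp, one_mul]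

lemma aux_inv_tendsto {p : ℕ} {A : ℕ → Matrix (Fin p) (Fin p) ℝ}
    {B : Matrix (Fin p) (Fin p) ℝ} (hB : IsUnit B)
    (h : Tendsto A atTop (𝓝 B)) : Tendsto (fun n => (A n)⁻¹) atTop (𝓝 B⁻¹) := by
  have hdet : B.det ≠ 0 := by
    have := (Matrix.isUnit_iff_isUnit_det B).mp hB
    exact IsUnit.ne_zero this
  have hdt : Tendsto (fun n => (A n).det) atTop (𝓝 B.det) :=
    ((Continuous.matrix_det continuous_id).tendsto B).comp h
  have hadj : Tendsto (fun n => (A n).adjugate) atTop (𝓝 B.adjugate) :=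
    ((Continuous.matrix_adjugate continuous_id).tendsto B).comp h
  have hinv : Tendsto (fun n => ((A n).det)⁻¹) atTop (𝓝 (B.det)⁻¹) := hdt.inv₀ hdet
  have := hinv.smul hadj
  simpa only [Matrix.inv_def, Ring.inverse_eq_inv] using this

lemma aux_toeplitz {t e : ℕ → ℝ} (ht : ∀ k, 0 ≤ t k) (he : ∀ k, 0 ≤ e k) {c : ℝ}
    (hT : Tendsto (fun n : ℕ => (Real.log n)⁻¹ * ∑ k ∈ Finset.Icc 1 n, t k) atTop (𝓝 c))
    (hε : Tendsto e atTop (𝓝 0)) :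
    Tendsto (fun n : ℕ => (Real.log n)⁻¹ * ∑ k ∈ Finset.Icc 1 n, e k * t k) atTop (𝓝 0) := by
  rw [NormedAddCommGroup.tendsto_nhds_zero]
  intro ε hε'
  set δ := ε / (2 * (|c| + 1)) with hδdef
  have hδ : 0 < δ := by positivity
  obtain ⟨N, hN⟩ := (Metric.tendsto_atTop.mp hε) δ hδ
  set C := ∑ k ∈ Finset.Icc 1 N, e k * t k with hC
  have hC0 : 0 ≤ C := Finset.sum_nonneg fun k _ => mul_nonneg (he k) (ht k)
  have key : ∀ n, ∑ k ∈ Finset.Icc 1 n, e k * t k ≤ C + δ * ∑ k ∈ Finset.Icc 1 n, t k := by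
    intro n
    have h1 : ∑ k ∈ Finset.Icc 1 n, e k * t k ≤
        ∑ k ∈ Finset.Icc 1 n, ((if k ≤ N then e k * t k else 0) + δ * t k) := by
      apply Finset.sum_le_sum
      intro k _
      by_cases hk : k ≤ N
      · simp only [hk, if_true]
        nlinarith [mul_nonneg hδ.le (ht k)]
      · simp only [hk, if_false, zero_add]
        have hkN : N ≤ k := le_of_not_ge hk
        have := hN k hkN
        rw [Real.dist_eq, sub_zero] at this
        have hek : e k ≤ δ := le_of_lt (lt_of_abs_lt this)
        exact mul_le_mul_of_nonneg_right hek (ht k)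
    rw [Finset.sum_add_distrib, ← Finset.mul_sum] at h1
    refine h1.trans (add_le_add ?_ le_rfl)
    rw [← Finset.sum_filter]
    apply Finset.sum_le_sum_of_subset_of_nonneg
    · intro k hk
      simp only [Finset.mem_filter, Finset.mem_Icc] at hk
      exact Finset.mem_Icc.mpr ⟨hk.1.1, hk.2⟩
    · intro k _ _
      exact mul_nonneg (he k) (ht k)
  -- eventual bounds
  have hlog : Tendsto (fun n : ℕ => (Real.log n)⁻¹) atTop (𝓝 0) := by
    apply Tendsto.inv_tendsto_atTop
    exact Real.tendsto_log_atTop.comp tendsto_natCast_atTop_atTop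
  have hCsmall : ∀ᶠ n : ℕ in atTop, (Real.log n)⁻¹ * C < ε / 2 := by
    have : Tendsto (fun n : ℕ => (Real.log n)⁻¹ * C) atTop (𝓝 0) := by
      simpa using hlog.mul_const C
    exact this.eventually_lt_const (by positivity)
  have hTb : ∀ᶠ n : ℕ in atTop, (Real.log n)⁻¹ * ∑ k ∈ Finset.Icc 1 n, t k < |c| + 1 :=
    hT.eventually_lt_const (lt_of_le_of_lt (le_abs_self c) (by linarith))
  filter_upwards [hCsmall, hTb, eventually_ge_atTop 2] with n h₁ h₂ h₃
  have hlogpos : 0 < Real.log n := by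
    apply Real.log_pos
    exact_mod_cast (by omega : (1:ℕ) < n)
  have hinv0 : 0 ≤ (Real.log n)⁻¹ := inv_nonneg.mpr hlogpos.le
  have hsum0 : 0 ≤ ∑ k ∈ Finset.Icc 1 n, e k * t k :=
    Finset.sum_nonneg fun k _ => mul_nonneg (he k) (ht k)
  rw [Real.norm_eq_abs, abs_of_nonneg (mul_nonneg hinv0 hsum0)]
  have hb : (Real.log n)⁻¹ * ∑ k ∈ Finset.Icc 1 n, e k * t k ≤
      (Real.log n)⁻¹ * C + δ * ((Real.log n)⁻¹ * ∑ k ∈ Finset.Icc 1 n, t k) := by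
    have := mul_le_mul_of_nonneg_left (key n) hinv0
    calc (Real.log n)⁻¹ * ∑ k ∈ Finset.Icc 1 n, e k * t k
        ≤ (Real.log n)⁻¹ * (C + δ * ∑ k ∈ Finset.Icc 1 n, t k) := this
      _ = (Real.log n)⁻¹ * C + δ * ((Real.log n)⁻¹ * ∑ k ∈ Finset.Icc 1 n, t k) := by ring
  have hd : δ * ((Real.log n)⁻¹ * ∑ k ∈ Finset.Icc 1 n, t k) ≤ δ * (|c| + 1) :=
    mul_le_mul_of_nonneg_left h₂.le hδ.le
  have hde : δ * (|c| + 1) = ε / 2 := by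
    rw [hδdef]
    field_simp
  linarith

section NormLemmas
attribute [local instance] Matrix.normedAddCommGroup Matrix.normedSpace

lemma aux_norm_mul {p : ℕ} (A B : Matrix (Fin p) (Fin p) ℝ) :
    ‖A * B‖ ≤ p * ‖A‖ * ‖B‖ := by
  have h0 : (0:ℝ) ≤ p * ‖A‖ * ‖B‖ := by positivity
  rw [Matrix.norm_le_iff h0]
  intro i j
  rw [Matrix.mul_apply]
  calc ‖∑ a, A i a * B a j‖ ≤ ∑ a, ‖A i a * B a j‖ := norm_sum_le _ _
    _ ≤ ∑ _a : Fin p, ‖A‖ * ‖B‖ := by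
        apply Finset.sum_le_sum
        intro a _
        rw [norm_mul]
        exact mul_le_mul (Matrix.norm_entry_le_entrywise_sup_norm A)
          (Matrix.norm_entry_le_entrywise_sup_norm B) (norm_nonneg _) (norm_nonneg _)
    _ = p * ‖A‖ * ‖B‖ := by
        rw [Finset.sum_const, Finset.card_univ, Fintype.card_fin, nsmul_eq_mul]; ring

lemma aux_norm_vecMulVec {p : ℕ} {c : ℝ} (hc : 0 ≤ c) (v : Fin p → ℝ) :
    ‖c • vecMulVec v v‖ ≤ (c • vecMulVec v v).trace := by
  have htr : (c • vecMulVec v v).trace = c * ∑ a, v a ^ 2 := by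
    rw [Matrix.trace_smul, smul_eq_mul]
    congr 1
    simp [Matrix.trace, Matrix.vecMulVec_apply, sq]
  rw [htr, Matrix.norm_le_iff (by positivity)]
  intro i j
  simp only [Matrix.smul_apply, Matrix.vecMulVec_apply, smul_eq_mul, Real.norm_eq_abs,
    abs_mul, abs_of_nonneg hc]
  have h1 : |v i| * |v j| ≤ ∑ a, v a ^ 2 := by
    have h2 : 2 * (|v i| * |v j|) ≤ |v i| ^ 2 + |v j| ^ 2 := by
      nlinarith [sq_nonneg (|v i| - |v j|)]
    have h3 : v i ^ 2 ≤ ∑ a, v a ^ 2 :=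
      Finset.single_le_sum (fun a _ => sq_nonneg (v a)) (Finset.mem_univ i)
    have h4 : v j ^ 2 ≤ ∑ a, v a ^ 2 :=
      Finset.single_le_sum (fun a _ => sq_nonneg (v a)) (Finset.mem_univ j)
    rw [sq_abs, sq_abs] at h2
    linarith
  exact mul_le_mul_of_nonneg_left h1 hc

end NormLemmas


section Main
attribute [local instance] Matrix.normedAddCommGroup Matrix.normedSpace

lemma aux_main {p : ℕ} (hp : 1 ≤ p) (M : ℕ → Fin p → ℝ) (V : ℕ → Matrix (Fin p) (Fin p) ℝ)
    (Iθ : Matrix (Fin p) (Fin p) ℝ) (hIθ : IsUnit Iθ)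
    (h1 : Tendsto (fun n : ℕ => ((p : ℝ) * Real.log n)⁻¹ •
          ∑ k ∈ Finset.Icc 1 n,
            ((1 - (k : ℝ) ^ p / ((k : ℝ) + 1) ^ p) * (k : ℝ)⁻¹) •
              vecMulVec (M k) (M k)) atTop (𝓝 Iθ))
    (h2 : Tendsto (fun k : ℕ => (k : ℝ)⁻¹ • V k) atTop (𝓝 Iθ)) :
    Tendsto (fun n : ℕ => (Real.log n)⁻¹ •
          ∑ k ∈ Finset.Icc 1 n,
            (V k)⁻¹ * vecMulVec (M k) (M k) * (V k)⁻¹) atTop (𝓝 Iθ⁻¹) := by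
  have hp0 : (p : ℝ) ≠ 0 := by positivity
  set r : ℕ → ℝ := fun k => (k : ℝ) ^ p / ((k : ℝ) + 1) ^ p with hrdef
  set X : ℕ → Matrix (Fin p) (Fin p) ℝ :=
    fun k => ((1 - r k) * (k : ℝ)⁻¹) • vecMulVec (M k) (M k) with hXdef
  have hrle : ∀ k : ℕ, r k ≤ 1 := by
    intro k
    rw [hrdef]
    apply div_le_one_of_le₀
    · exact pow_le_pow_left₀ (by positivity) (by linarith [Nat.cast_nonneg (α := ℝ) k]) p
    · positivity
  have hrlt : ∀ k : ℕ, r k < 1 := by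
    intro k
    rw [hrdef]
    rw [div_lt_one (by positivity)]
    exact pow_lt_pow_left₀ (by linarith [Nat.cast_nonneg (α := ℝ) k]) (by positivity)
      (by omega)
  have hcnn : ∀ k : ℕ, 0 ≤ (1 - r k) * (k : ℝ)⁻¹ := by
    intro k
    have := hrle k
    have : (0:ℝ) ≤ 1 - r k := by linarith
    positivity
  -- (f1)
  have hX : Tendsto (fun n : ℕ => (Real.log n)⁻¹ • ∑ k ∈ Finset.Icc 1 n, X k) atTop
      (𝓝 ((p : ℝ) • Iθ)) := by
    have h := h1.const_smul (p : ℝ)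
    apply h.congr
    intro n
    rw [smul_smul, mul_inv, ← mul_assoc, mul_inv_cancel₀ hp0, one_mul]
  -- traces
  have htX : ∀ k, ‖X k‖ ≤ (X k).trace := fun k => aux_norm_vecMulVec (hcnn k) _
  have ht0 : ∀ k, 0 ≤ (X k).trace := fun k => le_trans (norm_nonneg _) (htX k)
  have hTtr : Tendsto (fun n : ℕ => (Real.log n)⁻¹ * ∑ k ∈ Finset.Icc 1 n, (X k).trace)
      atTop (𝓝 (((p : ℝ) • Iθ).trace)) := by
    have h := ((Continuous.matrix_trace continuous_id).tendsto ((p : ℝ) • Iθ)).comp hX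
    apply h.congr
    intro n
    simp [Matrix.trace_smul, Matrix.trace_sum, smul_eq_mul]
  -- (f2)
  set F : ℕ → Matrix (Fin p) (Fin p) ℝ := fun k => (k : ℝ) • (V k)⁻¹ with hFdef
  have hF : Tendsto F atTop (𝓝 Iθ⁻¹) := by
    have h3 := aux_inv_tendsto hIθ h2
    apply h3.congr'
    filter_upwards [eventually_ge_atTop 1] with k hk
    have hk0 : ((k : ℝ))⁻¹ ≠ 0 := by
      have : (k : ℝ) ≠ 0 := by positivity
      exact inv_ne_zero this
    rw [aux_smul_inv hp hk0, inv_inv]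
  set E : ℕ → Matrix (Fin p) (Fin p) ℝ := fun k => (1 - r k)⁻¹ • (V k)⁻¹ with hEdef
  have hE : Tendsto E atTop (𝓝 ((p : ℝ)⁻¹ • Iθ⁻¹)) := by
    have hA := aux_limit (p := p) hp
    have hA' : Tendsto (fun k : ℕ => ((k : ℝ) * (1 - r k))⁻¹) atTop (𝓝 ((p : ℝ)⁻¹)) :=
      hA.inv₀ hp0
    have h := hA'.smul hF
    apply h.congr'
    filter_upwards [eventually_ge_atTop 1] with k hk
    have hkne : (k : ℝ) ≠ 0 := by positivity
    show ((k : ℝ) * (1 - r k))⁻¹ • ((k : ℝ) • (V k)⁻¹) = (1 - r k)⁻¹ • (V k)⁻¹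
    rw [smul_smul]
    congr 1
    rw [mul_inv, mul_comm ((k : ℝ)⁻¹) _, mul_assoc, inv_mul_cancel₀ hkne, mul_one]
  -- (f3) remainder
  set Ei : Matrix (Fin p) (Fin p) ℝ := (p : ℝ)⁻¹ • Iθ⁻¹ with hEi
  set e : ℕ → ℝ := fun k =>
    (p : ℝ) ^ 2 * ‖E k - Ei‖ * ‖F k‖ + (p : ℝ) ^ 2 * ‖Ei‖ * ‖F k - Iθ⁻¹‖ with hedef
  have he0 : ∀ k, 0 ≤ e k := by intro k; positivity
  have heT : Tendsto e atTop (𝓝 0) := by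
    have t1 : Tendsto (fun k => ‖E k - Ei‖) atTop (𝓝 0) := by
      have := (hE.sub (tendsto_const_nhds (x := Ei))).norm
      simpa using this
    have t2 : Tendsto (fun k => ‖F k‖) atTop (𝓝 ‖Iθ⁻¹‖) := hF.norm
    have t3 : Tendsto (fun k => ‖F k - Iθ⁻¹‖) atTop (𝓝 0) := by
      have := (hF.sub (tendsto_const_nhds (x := Iθ⁻¹))).norm
      simpa using this
    have hsum := (((tendsto_const_nhds (x := (p : ℝ) ^ 2)).mul t1).mul t2).add
      ((tendsto_const_nhds (x := (p : ℝ) ^ 2 * ‖Ei‖)).mul t3)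
    simpa [hedef, mul_assoc] using hsum
  have hR : ∀ k, ‖E k * X k * F k - Ei * X k * Iθ⁻¹‖ ≤ e k * (X k).trace := by
    intro k
    have hsplit : E k * X k * F k - Ei * X k * Iθ⁻¹ =
        (E k - Ei) * X k * F k + Ei * X k * (F k - Iθ⁻¹) := by
      noncomm_ring
    have hb1 : ‖(E k - Ei) * X k * F k‖ ≤ (p : ℝ) ^ 2 * ‖E k - Ei‖ * ‖F k‖ * (X k).trace := by
      calc ‖(E k - Ei) * X k * F k‖ ≤ (p : ℝ) * ‖(E k - Ei) * X k‖ * ‖F k‖ :=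
            aux_norm_mul _ _
        _ ≤ (p : ℝ) * ((p : ℝ) * ‖E k - Ei‖ * ‖X k‖) * ‖F k‖ := by
            gcongr
            exact aux_norm_mul _ _
        _ ≤ (p : ℝ) * ((p : ℝ) * ‖E k - Ei‖ * (X k).trace) * ‖F k‖ := by
            gcongr
            exact htX k
        _ = (p : ℝ) ^ 2 * ‖E k - Ei‖ * ‖F k‖ * (X k).trace := by ring
    have hb2 : ‖Ei * X k * (F k - Iθ⁻¹)‖ ≤
        (p : ℝ) ^ 2 * ‖Ei‖ * ‖F k - Iθ⁻¹‖ * (X k).trace := by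
      calc ‖Ei * X k * (F k - Iθ⁻¹)‖ ≤ (p : ℝ) * ‖Ei * X k‖ * ‖F k - Iθ⁻¹‖ :=
            aux_norm_mul _ _
        _ ≤ (p : ℝ) * ((p : ℝ) * ‖Ei‖ * ‖X k‖) * ‖F k - Iθ⁻¹‖ := by
            gcongr
            exact aux_norm_mul _ _
        _ ≤ (p : ℝ) * ((p : ℝ) * ‖Ei‖ * (X k).trace) * ‖F k - Iθ⁻¹‖ := by
            gcongr
            exact htX k
        _ = (p : ℝ) ^ 2 * ‖Ei‖ * ‖F k - Iθ⁻¹‖ * (X k).trace := by ring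
    calc ‖E k * X k * F k - Ei * X k * Iθ⁻¹‖
        ≤ ‖(E k - Ei) * X k * F k‖ + ‖Ei * X k * (F k - Iθ⁻¹)‖ := by
          rw [hsplit]; exact norm_add_le _ _
      _ ≤ (p : ℝ) ^ 2 * ‖E k - Ei‖ * ‖F k‖ * (X k).trace +
          (p : ℝ) ^ 2 * ‖Ei‖ * ‖F k - Iθ⁻¹‖ * (X k).trace := add_le_add hb1 hb2
      _ = e k * (X k).trace := by rw [hedef]; ring
  have hlognn : ∀ n : ℕ, 0 ≤ (Real.log n)⁻¹ := by
    intro n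
    match n with
    | 0 => simp
    | (m+1) =>
      apply inv_nonneg.mpr
      apply Real.log_natCast_nonneg
  have hRsum : Tendsto (fun n : ℕ => (Real.log n)⁻¹ •
      ∑ k ∈ Finset.Icc 1 n, (E k * X k * F k - Ei * X k * Iθ⁻¹)) atTop (𝓝 0) := by
    refine squeeze_zero_norm (fun n => ?_) (aux_toeplitz ht0 he0 hTtr heT)
    · rw [norm_smul, Real.norm_eq_abs, abs_of_nonneg (hlognn n)]
      apply mul_le_mul_of_nonneg_left _ (hlognn n)
      calc ‖∑ k ∈ Finset.Icc 1 n, (E k * X k * F k - Ei * X k * Iθ⁻¹)‖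
          ≤ ∑ k ∈ Finset.Icc 1 n, ‖E k * X k * F k - Ei * X k * Iθ⁻¹‖ := norm_sum_le _ _
        _ ≤ ∑ k ∈ Finset.Icc 1 n, e k * (X k).trace := Finset.sum_le_sum fun k _ => hR k
  -- main combination
  have hdet : IsUnit Iθ.det := (Matrix.isUnit_iff_isUnit_det Iθ).mp hIθ
  have hmain : Tendsto (fun n : ℕ =>
      Ei * ((Real.log n)⁻¹ • ∑ k ∈ Finset.Icc 1 n, X k) * Iθ⁻¹ +
      (Real.log n)⁻¹ • ∑ k ∈ Finset.Icc 1 n, (E k * X k * F k - Ei * X k * Iθ⁻¹))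
      atTop (𝓝 (Ei * ((p : ℝ) • Iθ) * Iθ⁻¹ + 0)) :=
    (((tendsto_const_nhds (x := Ei)).mul hX).mul (tendsto_const_nhds (x := Iθ⁻¹))).add hRsum
  have hval : Ei * ((p : ℝ) • Iθ) * Iθ⁻¹ + 0 = Iθ⁻¹ := by
    rw [add_zero, hEi, Matrix.smul_mul, Matrix.mul_smul, smul_smul,
      inv_mul_cancel₀ hp0, one_smul, Matrix.nonsing_inv_mul Iθ hdet, Matrix.one_mul]
  rw [hval] at hmain
  apply hmain.congr
  intro n
  -- pointwise identity inside the sum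
  have hterm : ∀ k ∈ Finset.Icc 1 n,
      E k * X k * F k = (V k)⁻¹ * vecMulVec (M k) (M k) * (V k)⁻¹ := by
    intro k hk
    have hk1 : 1 ≤ k := (Finset.mem_Icc.mp hk).1
    have hkne : (k : ℝ) ≠ 0 := by positivity
    have hrne : 1 - r k ≠ 0 := by have := hrlt k; linarith
    show (1 - r k)⁻¹ • (V k)⁻¹ * (((1 - r k) * (k : ℝ)⁻¹) • vecMulVec (M k) (M k)) *
        ((k : ℝ) • (V k)⁻¹) = (V k)⁻¹ * vecMulVec (M k) (M k) * (V k)⁻¹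
    simp only [smul_mul_assoc, mul_smul_comm, smul_smul]
    nth_rewrite 2 [← one_smul ℝ ((V k)⁻¹ * vecMulVec (M k) (M k) * (V k)⁻¹)]
    congr 1
    field_simp
  have hsum1 : ∑ k ∈ Finset.Icc 1 n, (V k)⁻¹ * vecMulVec (M k) (M k) * (V k)⁻¹ =
      ∑ k ∈ Finset.Icc 1 n, E k * X k * F k :=
    (Finset.sum_congr rfl fun k hk => (hterm k hk).symm)
  have hsum2 : ∑ k ∈ Finset.Icc 1 n, E k * X k * F k =
      ∑ k ∈ Finset.Icc 1 n, Ei * X k * Iθ⁻¹ +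
      ∑ k ∈ Finset.Icc 1 n, (E k * X k * F k - Ei * X k * Iθ⁻¹) := by
    rw [← Finset.sum_add_distrib]
    apply Finset.sum_congr rfl
    intro k _
    abel
  have hsum3 : ∑ k ∈ Finset.Icc 1 n, Ei * X k * Iθ⁻¹ =
      Ei * (∑ k ∈ Finset.Icc 1 n, X k) * Iθ⁻¹ := by
    rw [Finset.mul_sum, Finset.sum_mul]
  rw [hsum1, hsum2, hsum3, smul_add]
  congr 1
  rw [mul_smul_comm, smul_mul_assoc]


end Main

/-- Transfer of the quadratic strong law from the martingale to the estimator: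
if `(p log n)⁻¹ ∑_{k=1}^n (1 - kᵖ/(k+1)ᵖ) Mₖ Mₖ*/k → I(θ)` a.s. and
`⟨M⟩ₖ/k → I(θ)` a.s. with `I(θ)` invertible, then
`(log n)⁻¹ ∑_{k=1}^n ⟨M⟩ₖ⁻¹ Mₖ Mₖ* ⟨M⟩ₖ⁻¹ → I(θ)⁻¹` a.s. -/
theorem stmt18 {Ω : Type*} [MeasureSpace Ω] [IsProbabilityMeasure (ℙ : Measure Ω)]
    {p : ℕ} (hp : 1 ≤ p)
    (M : ℕ → Ω → (Fin p → ℝ)) (V : ℕ → Ω → Matrix (Fin p) (Fin p) ℝ)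
    (Iθ : Matrix (Fin p) (Fin p) ℝ) (hIθ : IsUnit Iθ)
    (h1 : ∀ᵐ ω ∂(ℙ : Measure Ω),
      Tendsto (fun n : ℕ => ((p : ℝ) * Real.log n)⁻¹ •
          ∑ k ∈ Finset.Icc 1 n,
            ((1 - (k : ℝ) ^ p / ((k : ℝ) + 1) ^ p) * (k : ℝ)⁻¹) •
              vecMulVec (M k ω) (M k ω)) atTop (𝓝 Iθ))
    (h2 : ∀ᵐ ω ∂(ℙ : Measure Ω),
      Tendsto (fun k : ℕ => (k : ℝ)⁻¹ • V k ω) atTop (𝓝 Iθ)) :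
    ∀ᵐ ω ∂(ℙ : Measure Ω),
      Tendsto (fun n : ℕ => (Real.log n)⁻¹ •
          ∑ k ∈ Finset.Icc 1 n,
            (V k ω)⁻¹ * vecMulVec (M k ω) (M k ω) * (V k ω)⁻¹) atTop (𝓝 Iθ⁻¹) := by
  filter_upwards [h1, h2] with ω hω1 hω2
  exact aux_main hp (fun k => M k ω) (fun k => V k ω) Iθ hIθ hω1 hω2
end
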